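/- Let Γ be a Fuchsian group and let ρ, ρ′ : Γ → GL₂(ℂ) be two homomorphisms. If there exists a non-constant meromorphic function h on ℍ which is simultaneously ρ-equivariant and ρ′-equivariant, then there exists a character χ : Γ → ℂ^× such that ρ(γ) = χ(γ)ρ′(γ) for all γ ∈ Γ. -/

import Mathlib

noncomputable section

open Complex Matrix

local notation "SL2R" => Matrix.SpecialLinearGroup (Fin 2) ℝ

/-- The upper half-plane `ℍ`, as a subset of `ℂ`. -/
def UH : Set ℂ := {z : ℂ | 0 < z.im}

/-- The action of `γ ∈ SL(2,ℝ)` on the upper half-plane: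
`γ z = (a z + b) / (c z + d)`. -/
def actSL (γ : SL2R) (z : ℂ) : ℂ :=
  (((γ : Matrix (Fin 2) (Fin 2) ℝ) 0 0 : ℂ) * z + ((γ : Matrix (Fin 2) (Fin 2) ℝ) 0 1 : ℂ)) /
    (((γ : Matrix (Fin 2) (Fin 2) ℝ) 1 0 : ℂ) * z + ((γ : Matrix (Fin 2) (Fin 2) ℝ) 1 1 : ℂ))

/-- The Möbius (linear fractional) action `w ↦ (a w + b) / (c w + d)` of a complex
2×2 matrix `M = [[a,b],[c,d]]` on `ℂ`. -/
def moebC (M : Matrix (Fin 2) (Fin 2) ℂ) (w : ℂ) : ℂ :=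
  (M 0 0 * w + M 0 1) / (M 1 0 * w + M 1 1)

/-- A Fuchsian group: a subgroup of `SL(2,ℝ)` which is discrete
(as a subset of the space of 2×2 real matrices). -/
def IsFuchsian (Γ : Subgroup SL2R) : Prop :=
  DiscreteTopology ((fun γ : SL2R => (γ : Matrix (Fin 2) (Fin 2) ℝ)) '' (Γ : Set SL2R))

/-- The matrix `-I₂` as an element of `SL(2,ℝ)`. -/
def negI : SL2R :=
  ⟨!![-1, 0; 0, -1], by norm_num [Matrix.det_fin_two_of]⟩

/-- `h` is `ρ`-equivariant on the upper half-plane: `h (γ z) = ρ(γ) (h z)`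
for all `γ ∈ Γ` and all `z ∈ ℍ` away from the poles of `h`
(where `ρ(γ)` acts by linear fractional transformation). -/
def EquivariantOn (Γ : Subgroup SL2R) (ρ : Γ →* GL (Fin 2) ℂ) (h : ℂ → ℂ) : Prop :=
  ∀ γ : Γ, ∀ z ∈ UH, AnalyticAt ℂ h z → AnalyticAt ℂ h (actSL (γ : SL2R) z) →
    h (actSL (γ : SL2R) z) = moebC (ρ γ) (h z)

/-- `h` is non-constant on `D` (i.e. not constant on its regular points in `D`). -/
def NonconstOn (h : ℂ → ℂ) (D : Set ℂ) : Prop :=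
  ¬ ∃ c : ℂ, ∀ z ∈ D, AnalyticAt ℂ h z → h z = c

/-- The Schwarzian derivative `{h, z} = (h''/h')' - (1/2) (h''/h')²`. -/
def schwarzian (h : ℂ → ℂ) (z : ℂ) : ℂ :=
  deriv (fun w => deriv (deriv h) w / deriv h w) z -
    (1 / 2) * (deriv (deriv h) z / deriv h z) ^ 2

/-- `h` is meromorphic on `D` and all (possible) poles of `h` in `D` are simple. -/
def PolesSimpleOn (h : ℂ → ℂ) (D : Set ℂ) : Prop :=
  ∀ z ∈ D, ∃ hm : MeromorphicAt h z, (-1 : WithTop ℤ) ≤ meromorphicOrderAt h z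

/-- `F = (f₁, f₂)` is a `ℂ²`-valued automorphic form of weight `k` and multiplier
system `ρ` on `Γ`: `F(γ z) = (c z + d) ^ k • ρ(γ) • F(z)` for all `γ ∈ Γ` and all
`z ∈ ℍ` away from the poles of `F`. -/
def IsAutomorphicPair (Γ : Subgroup SL2R) (ρ : Γ →* GL (Fin 2) ℂ) (k : ℤ)
    (f₁ f₂ : ℂ → ℂ) : Prop :=
  ∀ γ : Γ, ∀ z ∈ UH,
    AnalyticAt ℂ f₁ z → AnalyticAt ℂ f₂ z →
    AnalyticAt ℂ f₁ (actSL (γ : SL2R) z) → AnalyticAt ℂ f₂ (actSL (γ : SL2R) z) →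
      f₁ (actSL (γ : SL2R) z) =
        (((γ : SL2R) : Matrix (Fin 2) (Fin 2) ℝ) 1 0 * z +
            ((γ : SL2R) : Matrix (Fin 2) (Fin 2) ℝ) 1 1) ^ k *
          ((ρ γ : Matrix (Fin 2) (Fin 2) ℂ) 0 0 * f₁ z +
            (ρ γ : Matrix (Fin 2) (Fin 2) ℂ) 0 1 * f₂ z) ∧
      f₂ (actSL (γ : SL2R) z) =
        (((γ : SL2R) : Matrix (Fin 2) (Fin 2) ℝ) 1 0 * z +
            ((γ : SL2R) : Matrix (Fin 2) (Fin 2) ℝ) 1 1) ^ k *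
          ((ρ γ : Matrix (Fin 2) (Fin 2) ℂ) 1 0 * f₁ z +
            (ρ γ : Matrix (Fin 2) (Fin 2) ℂ) 1 1 * f₂ z)

open Filter Topology Set

section Helpers

lemma isOpen_UH : IsOpen UH := isOpen_lt continuous_const Complex.continuous_im

lemma preconnected_UH : IsPreconnected UH := by
  apply Convex.isPreconnected
  intro x hx y hy a b ha hb hab
  simp only [UH, Set.mem_setOf_eq] at *
  simp [Complex.add_im, Complex.smul_re, Complex.smul_im]
  rcases ha.eq_or_lt with rfl | ha'
  · simp only [zero_add] at hab; subst hab; simpa using by positivity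
  rcases hb.eq_or_lt with rfl | hb'
  · simp at hab; simp [hab]; positivity
  · positivity

lemma det_coe' (γ : SL2R) :
    (γ : Matrix (Fin 2) (Fin 2) ℝ) 0 0 * (γ : Matrix (Fin 2) (Fin 2) ℝ) 1 1
    - (γ : Matrix (Fin 2) (Fin 2) ℝ) 0 1 * (γ : Matrix (Fin 2) (Fin 2) ℝ) 1 0 = 1 := by
  have := γ.2
  rwa [Matrix.det_fin_two] at this

lemma detC_coe (γ : SL2R) :
    ((γ : Matrix (Fin 2) (Fin 2) ℝ) 0 0 : ℂ) * ((γ : Matrix (Fin 2) (Fin 2) ℝ) 1 1 : ℂ)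
    - ((γ : Matrix (Fin 2) (Fin 2) ℝ) 0 1 : ℂ) * ((γ : Matrix (Fin 2) (Fin 2) ℝ) 1 0 : ℂ) = 1 := by
  exact_mod_cast det_coe' γ

lemma denom_ne_zero (γ : SL2R) {z : ℂ} (hz : z ∈ UH) :
    (((γ : Matrix (Fin 2) (Fin 2) ℝ) 1 0 : ℂ) * z + ((γ : Matrix (Fin 2) (Fin 2) ℝ) 1 1 : ℂ)) ≠ 0 := by
  set c := (γ : Matrix (Fin 2) (Fin 2) ℝ) 1 0
  set d := (γ : Matrix (Fin 2) (Fin 2) ℝ) 1 1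
  intro h
  have him := congrArg Complex.im h
  have hre := congrArg Complex.re h
  simp [Complex.add_im, Complex.add_re, Complex.mul_im, Complex.mul_re, Complex.ofReal_im,
    Complex.ofReal_re] at him hre
  have hz' : 0 < z.im := hz
  have hc : c = 0 := him.resolve_right hz'.ne'
  have hd : d = 0 := by
    rw [hc] at hre; simpa using hre
  have h2 := det_coe' γ
  rw [show (γ : Matrix (Fin 2) (Fin 2) ℝ) 1 1 = d from rfl,
    show (γ : Matrix (Fin 2) (Fin 2) ℝ) 1 0 = c from rfl, hc, hd] at h2
  simp at h2

lemma actSL_mem_UH (γ : SL2R) {z : ℂ} (hz : z ∈ UH) : actSL γ z ∈ UH := by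
  set a := (γ : Matrix (Fin 2) (Fin 2) ℝ) 0 0
  set b := (γ : Matrix (Fin 2) (Fin 2) ℝ) 0 1
  set c := (γ : Matrix (Fin 2) (Fin 2) ℝ) 1 0
  set d := (γ : Matrix (Fin 2) (Fin 2) ℝ) 1 1
  have hden := denom_ne_zero γ hz
  have hns : Complex.normSq ((c:ℂ) * z + (d:ℂ)) ≠ 0 := by simpa using hden
  have hns' : 0 < Complex.normSq ((c:ℂ) * z + (d:ℂ)) :=
    lt_of_le_of_ne (Complex.normSq_nonneg _) (Ne.symm hns)
  have hz' : 0 < z.im := hz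
  have hdet := det_coe' γ
  show 0 < (actSL γ z).im
  rw [actSL, Complex.div_im]
  have h1 : (((a:ℂ) * z + (b:ℂ)).im * ((c:ℂ) * z + (d:ℂ)).re -
      ((a:ℂ) * z + (b:ℂ)).re * ((c:ℂ) * z + (d:ℂ)).im) = z.im := by
    simp [Complex.add_im, Complex.add_re, Complex.mul_im, Complex.mul_re]
    nlinarith [hdet]
  have h2 : ((a:ℂ) * z + (b:ℂ)).im * ((c:ℂ) * z + (d:ℂ)).re / Complex.normSq ((c:ℂ) * z + (d:ℂ))
      - ((a:ℂ) * z + (b:ℂ)).re * ((c:ℂ) * z + (d:ℂ)).im / Complex.normSq ((c:ℂ) * z + (d:ℂ))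
      = z.im / Complex.normSq ((c:ℂ) * z + (d:ℂ)) := by
    rw [div_sub_div_same, h1]
  rw [h2]
  positivity

lemma actSL_injOn (γ : SL2R) {z w : ℂ} (hz : z ∈ UH) (hw : w ∈ UH)
    (h : actSL γ z = actSL γ w) : z = w := by
  have hdz := denom_ne_zero γ hz
  have hdw := denom_ne_zero γ hw
  rw [actSL, actSL, div_eq_div_iff hdz hdw] at h
  have hdet := detC_coe γ
  have : z - w = 0 := by linear_combination h - (z - w) * hdet
  exact sub_eq_zero.mp this

lemma actSL_continuousAt (γ : SL2R) {z : ℂ} (hz : z ∈ UH) : ContinuousAt (actSL γ) z := by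
  unfold actSL
  exact ContinuousAt.div (by fun_prop) (by fun_prop) (denom_ne_zero γ hz)

lemma actSL_tendsto_punctured (γ : SL2R) {z : ℂ} (hz : z ∈ UH) :
    Tendsto (actSL γ) (𝓝[≠] z) (𝓝[≠] (actSL γ z)) := by
  rw [tendsto_nhdsWithin_iff]
  constructor
  · exact (actSL_continuousAt γ hz).continuousWithinAt
  · have hUH : ∀ᶠ w in 𝓝[≠] z, w ∈ UH :=
      eventually_nhdsWithin_of_eventually_nhds (isOpen_UH.eventually_mem hz)
    filter_upwards [hUH, self_mem_nhdsWithin] with w hw hne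
    exact fun hc => hne (actSL_injOn γ hw hz hc)

lemma mero_dichotomy {f : ℂ → ℂ} {x : ℂ} (hf : MeromorphicAt f x) :
    (∀ᶠ z in 𝓝[≠] x, f z = 0) ∨ (∀ᶠ z in 𝓝[≠] x, f z ≠ 0) := by
  rcases eq_or_ne (meromorphicOrderAt f x) ⊤ with ho | ho
  · exact Or.inl (meromorphicOrderAt_eq_top_iff.mp ho)
  · right
    lift meromorphicOrderAt f x to ℤ using ho with n hn
    obtain ⟨g, hg_an, hg_ne, hg_eq⟩ := (meromorphicOrderAt_eq_int_iff hf).mp hn.symm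
    filter_upwards [hg_eq, self_mem_nhdsWithin,
      (hg_an.continuousAt.eventually_ne hg_ne).filter_mono nhdsWithin_le_nhds] with z h1 h2 h3
    rw [h1]
    exact mul_ne_zero (zpow_ne_zero _ (sub_ne_zero.mpr h2)) h3

/-- Identity theorem: a meromorphic function on `UH` which is eventually constant near
one point of `UH` is constant at all its analytic points of `UH`. -/
lemma mero_const_of_loc_const {h : ℂ → ℂ} (hmer : MeromorphicOn h UH)
    {z₀ : ℂ} (hz₀ : z₀ ∈ UH) {c : ℂ} (hc : ∀ᶠ w in 𝓝 z₀, h w = c) :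
    ∀ z ∈ UH, AnalyticAt ℂ h z → h z = c := by
  set E : Set ℂ := {z : ℂ | ∀ᶠ w in 𝓝[≠] z, h w = c} with hE
  set F : Set ℂ := {z : ℂ | ∀ᶠ w in 𝓝[≠] z, h w ≠ c} with hF
  have hEopen : IsOpen E := by
    rw [isOpen_iff_mem_nhds]
    intro z hz
    replace hz : ∀ᶠ w in 𝓝[≠] z, h w = c := hz
    rw [eventually_nhdsWithin_iff] at hz
    obtain ⟨T, hT, hTopen, hzT⟩ := eventually_nhds_iff.mp hz
    rw [mem_nhds_iff]
    refine ⟨T, fun w hw => ?_, hTopen, hzT⟩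
    show ∀ᶠ u in 𝓝[≠] w, h u = c
    have h1 : ∀ᶠ u in 𝓝[≠] w, u ∈ T :=
      eventually_nhdsWithin_of_eventually_nhds (hTopen.eventually_mem hw)
    by_cases hwz : w = z
    · subst hwz
      filter_upwards [h1, self_mem_nhdsWithin] with u hu hune
      exact hT u hu hune
    · have h2 : ∀ᶠ u in 𝓝[≠] w, u ≠ z :=
        eventually_nhdsWithin_of_eventually_nhds (eventually_ne_nhds hwz)
      filter_upwards [h1, h2] with u hu hune
      exact hT u hu hune
  have hFopen : IsOpen F := by
    rw [isOpen_iff_mem_nhds]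
    intro z hz
    replace hz : ∀ᶠ w in 𝓝[≠] z, h w ≠ c := hz
    rw [eventually_nhdsWithin_iff] at hz
    obtain ⟨T, hT, hTopen, hzT⟩ := eventually_nhds_iff.mp hz
    rw [mem_nhds_iff]
    refine ⟨T, fun w hw => ?_, hTopen, hzT⟩
    show ∀ᶠ u in 𝓝[≠] w, h u ≠ c
    have h1 : ∀ᶠ u in 𝓝[≠] w, u ∈ T :=
      eventually_nhdsWithin_of_eventually_nhds (hTopen.eventually_mem hw)
    by_cases hwz : w = z
    · subst hwz
      filter_upwards [h1, self_mem_nhdsWithin] with u hu hune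
      exact hT u hu hune
    · have h2 : ∀ᶠ u in 𝓝[≠] w, u ≠ z :=
        eventually_nhdsWithin_of_eventually_nhds (eventually_ne_nhds hwz)
      filter_upwards [h1, h2] with u hu hune
      exact hT u hu hune
  have hcover : UH ⊆ E ∪ F := by
    intro z hz
    have hm : MeromorphicAt (fun w => h w - c) z := (hmer z hz).sub (MeromorphicAt.const c z)
    rcases mero_dichotomy hm with h0 | h0
    · left; filter_upwards [h0] with u hu; exact sub_eq_zero.mp hu
    · right; filter_upwards [h0] with u hu; exact sub_ne_zero.mp hu
  have hdisj : UH ∩ (E ∩ F) = ∅ := by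
    ext z
    simp only [Set.mem_inter_iff, Set.mem_empty_iff_false, iff_false]
    rintro ⟨hzU, hzE, hzF⟩
    have hfa : ∀ᶠ w in 𝓝[≠] z, False := by
      filter_upwards [hzE, hzF] with u h1 h2; exact h2 h1
    exact (hfa.exists).elim (fun _ hf => hf)
  have hEne : (UH ∩ E).Nonempty := ⟨z₀, hz₀, hc.filter_mono nhdsWithin_le_nhds⟩
  have hUE : UH ⊆ E := by
    by_contra hcon
    obtain ⟨z, hzU, hzE⟩ := Set.not_subset.mp hcon
    have hFne : (UH ∩ F).Nonempty := ⟨z, hzU, (hcover hzU).resolve_left hzE⟩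
    obtain ⟨w, hw⟩ := preconnected_UH E F hEopen hFopen hcover hEne hFne
    rw [← Set.mem_empty_iff_false w, ← hdisj]
    exact ⟨hw.1, hw.2⟩
  intro z hz han
  have h1 : Tendsto h (𝓝[≠] z) (𝓝 (h z)) := (han.continuousAt.continuousWithinAt).tendsto
  have h2 : Tendsto h (𝓝[≠] z) (𝓝 c) := tendsto_nhds_of_eventually_eq (hUE hz)
  exact tendsto_nhds_unique h1 h2

lemma lin_root_subsingleton {c d : ℂ} (h : ¬(c = 0 ∧ d = 0)) :
    {w : ℂ | c * w + d = 0}.Subsingleton := by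
  intro w1 h1 w2 h2
  simp only [Set.mem_setOf_eq] at h1 h2
  rcases eq_or_ne c 0 with hc | hc
  · exfalso; subst hc; exact h ⟨rfl, by simpa using h1⟩
  · have h3 : c * (w1 - w2) = 0 := by linear_combination h1 - h2
    have h4 := (mul_eq_zero.mp h3).resolve_left hc
    exact sub_eq_zero.mp h4

lemma moeb_proportional {M N : Matrix (Fin 2) (Fin 2) ℂ}
    (hM : M.det ≠ 0) (hN : N.det ≠ 0) {S : Set ℂ} (hS : S.Infinite)
    (heq : ∀ w ∈ S, moebC M w = moebC N w) :
    ∃ c : ℂˣ, M = (c : ℂ) • N := by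
  set a := M 0 0; set b := M 0 1; set c := M 1 0; set d := M 1 1
  set p := N 0 0; set q := N 0 1; set r := N 1 0; set s := N 1 1
  have hdM : a * d - b * c ≠ 0 := by rwa [Matrix.det_fin_two] at hM
  have hdN : p * s - q * r ≠ 0 := by rwa [Matrix.det_fin_two] at hN
  have hB1 : {w : ℂ | c * w + d = 0}.Subsingleton := by
    apply lin_root_subsingleton
    rintro ⟨h1, h2⟩; apply hdM; rw [h1, h2]; ring
  have hB2 : {w : ℂ | r * w + s = 0}.Subsingleton := by
    apply lin_root_subsingleton
    rintro ⟨h1, h2⟩; apply hdN; rw [h1, h2]; ring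
  have hS'' : (S \ ({w : ℂ | c * w + d = 0} ∪ {w : ℂ | r * w + s = 0})).Infinite :=
    hS.diff (hB1.finite.union hB2.finite)
  have key : ∀ w ∈ S \ ({w : ℂ | c * w + d = 0} ∪ {w : ℂ | r * w + s = 0}),
      (a * w + b) * (r * w + s) = (p * w + q) * (c * w + d) := by
    rintro w ⟨hwS, hwB⟩
    simp only [Set.mem_union, Set.mem_setOf_eq, not_or] at hwB
    have := heq w hwS
    rw [moebC, moebC, div_eq_div_iff hwB.1 hwB.2] at this
    exact this
  obtain ⟨w1, hw1⟩ := hS''.nonempty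
  obtain ⟨w2, hw2⟩ := (hS''.diff (Set.finite_singleton w1)).nonempty
  obtain ⟨w3, hw3⟩ := (hS''.diff ((Set.finite_singleton w1).insert w2)).nonempty
  obtain ⟨hw2S, hw2ne⟩ := hw2
  obtain ⟨hw3S, hw3ne⟩ := hw3
  simp only [Set.mem_singleton_iff, Set.mem_insert_iff, not_or] at hw2ne hw3ne
  have q1 := key w1 hw1
  have q2 := key w2 hw2S
  have q3 := key w3 hw3S
  have d12 : w1 - w2 ≠ 0 := sub_ne_zero.mpr (fun hh => hw2ne hh.symm)
  have d13 : w1 - w3 ≠ 0 := sub_ne_zero.mpr (fun hh => hw3ne.2 hh.symm)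
  have d23 : w2 - w3 ≠ 0 := sub_ne_zero.mpr (fun hh => hw3ne.1 hh.symm)
  set e2 := a * r - p * c with he2
  set e1 := a * s + b * r - (p * d + q * c) with he1
  set e0 := b * s - q * d with he0
  have f12 : e2 * (w1 + w2) + e1 = 0 := by
    have : (w1 - w2) * (e2 * (w1 + w2) + e1) = 0 := by
      rw [he2, he1]; linear_combination q1 - q2
    exact (mul_eq_zero.mp this).resolve_left d12
  have f13 : e2 * (w1 + w3) + e1 = 0 := by
    have : (w1 - w3) * (e2 * (w1 + w3) + e1) = 0 := by
      rw [he2, he1]; linear_combination q1 - q3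
    exact (mul_eq_zero.mp this).resolve_left d13
  have he2z : e2 = 0 := by
    have : (w2 - w3) * e2 = 0 := by linear_combination f12 - f13
    exact (mul_eq_zero.mp this).resolve_left d23
  have he1z : e1 = 0 := by
    have := f12; rw [he2z] at this; simpa using this
  have he0z : e0 = 0 := by
    have : e2 * w1 ^ 2 + e1 * w1 + e0 = 0 := by
      rw [he2, he1, he0]; linear_combination q1
    rw [he2z, he1z] at this; simpa using this
  rw [he2] at he2z; rw [he1] at he1z; rw [he0] at he0z
  rcases eq_or_ne r 0 with hr | hr
  · have hs : s ≠ 0 := fun hh => hdN (by rw [hh, hr]; ring)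
    have hcz : c = 0 := by
      have : p * c = 0 := by linear_combination -he2z + a * hr
      rcases mul_eq_zero.mp this with h | h
      · exfalso; apply hdN; rw [h, hr]; ring
      · exact h
    have hd : d ≠ 0 := fun hh => hdM (by rw [hh, hcz]; ring)
    refine ⟨Units.mk0 (d / s) (div_ne_zero hd hs), ?_⟩
    ext i j
    fin_cases i <;> fin_cases j <;>
      simp only [Matrix.smul_apply, smul_eq_mul, Units.val_mk0]
    · show a = d / s * p
      field_simp
      linear_combination he1z - b * hr + q * hcz
    · show b = d / s * q
      field_simp
      linear_combination he0z
    · show c = d / s * r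
      rw [hcz, hr]; ring
    · show d = d / s * s
      field_simp
  · have hc : c ≠ 0 := by
      intro hcz
      have : a * r = 0 := by linear_combination he2z + hcz * p
      have ha : a = 0 := (mul_eq_zero.mp this).resolve_right hr
      apply hdM; rw [ha, hcz]; ring
    have hu : d * r - c * s = 0 := by
      have h0 : (d * r - c * s) * (p * s - q * r) = 0 := by
        linear_combination r ^ 2 * he0z - s * r * he1z + s ^ 2 * he2z
      exact (mul_eq_zero.mp h0).resolve_right hdN
    have hbv : b * r - q * c = 0 := by
      have h0 : r * (b * r - q * c) = 0 := by
        linear_combination r * he1z - s * he2z + p * hu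
      exact (mul_eq_zero.mp h0).resolve_left hr
    refine ⟨Units.mk0 (c / r) (div_ne_zero hc hr), ?_⟩
    ext i j
    fin_cases i <;> fin_cases j <;>
      simp only [Matrix.smul_apply, smul_eq_mul, Units.val_mk0]
    · show a = c / r * p
      field_simp; linear_combination he2z
    · show b = c / r * q
      field_simp; linear_combination hbv
    · show c = c / r * r
      field_simp
    · show d = c / r * s
      field_simp; linear_combination hu

end Helpers

/-- Let `Γ` be a Fuchsian group and `ρ, ρ' : Γ → GL(2,ℂ)` two
homomorphisms. If some non-constant meromorphic function `h` on `ℍ` is simultaneously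
`ρ`-equivariant and `ρ'`-equivariant, then there is a character `χ : Γ → ℂˣ` with
`ρ(γ) = χ(γ) ρ'(γ)` for all `γ ∈ Γ`. -/
theorem eq_character_smul_of_doubly_equivariant
    (Γ : Subgroup SL2R) (hΓ : IsFuchsian Γ) (ρ ρ' : Γ →* GL (Fin 2) ℂ)
    (h : ℂ → ℂ) (hmer : MeromorphicOn h UH) (hnc : NonconstOn h UH)
    (hequiv : EquivariantOn Γ ρ h) (hequiv' : EquivariantOn Γ ρ' h) :
    ∃ χ : Γ →* ℂˣ, ∀ γ : Γ,
      ((ρ γ : GL (Fin 2) ℂ) : Matrix (Fin 2) (Fin 2) ℂ) =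
        (χ γ : ℂ) • ((ρ' γ : GL (Fin 2) ℂ) : Matrix (Fin 2) (Fin 2) ℂ) := by
  classical
  have hdet : ∀ (τ : Γ →* GL (Fin 2) ℂ) (γ : Γ),
      ((τ γ : GL (Fin 2) ℂ) : Matrix (Fin 2) (Fin 2) ℂ).det ≠ 0 := by
    intro τ γ
    have h1 : IsUnit ((τ γ : GL (Fin 2) ℂ) : Matrix (Fin 2) (Fin 2) ℂ).det :=
      (Matrix.isUnit_iff_isUnit_det _).mp (τ γ).isUnit
    exact h1.ne_zero
  have main : ∀ γ : Γ, ∃ c : ℂˣ,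
      ((ρ γ : GL (Fin 2) ℂ) : Matrix (Fin 2) (Fin 2) ℂ) =
        (c : ℂ) • ((ρ' γ : GL (Fin 2) ℂ) : Matrix (Fin 2) (Fin 2) ℂ) := by
    intro γ
    set g : SL2R := (γ : SL2R) with hg
    set Gs : Set ℂ := {z | z ∈ UH ∧ AnalyticAt ℂ h z ∧ AnalyticAt ℂ h (actSL g z)} with hGsdef
    have hGnhds : ∀ z ∈ Gs, Gs ∈ 𝓝 z := by
      rintro z ⟨hzU, hza, hzg⟩
      have F1 : UH ∈ 𝓝 z := isOpen_UH.mem_nhds hzU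
      have F2 : {x | AnalyticAt ℂ h x} ∈ 𝓝 z := (isOpen_analyticAt ℂ h).mem_nhds hza
      have F3 : (actSL g) ⁻¹' {x | AnalyticAt ℂ h x} ∈ 𝓝 z :=
        (actSL_continuousAt g hzU).preimage_mem_nhds ((isOpen_analyticAt ℂ h).mem_nhds hzg)
      filter_upwards [F1, F2, F3] with w h1 h2 h3
      exact ⟨h1, h2, h3⟩
    have hI : Complex.I ∈ UH := by simp [UH]
    have hgI : actSL g Complex.I ∈ UH := actSL_mem_UH g hI
    have ev1 : ∀ᶠ z in 𝓝[≠] Complex.I, AnalyticAt ℂ h z := (hmer _ hI).eventually_analyticAt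
    have ev2 : ∀ᶠ z in 𝓝[≠] Complex.I, AnalyticAt ℂ h (actSL g z) :=
      (actSL_tendsto_punctured g hI).eventually (hmer _ hgI).eventually_analyticAt
    have ev3 : ∀ᶠ z in 𝓝[≠] Complex.I, z ∈ UH :=
      eventually_nhdsWithin_of_eventually_nhds (isOpen_UH.eventually_mem hI)
    obtain ⟨z₀, hz₀U, hz₀a, hz₀g⟩ := (ev3.and (ev1.and ev2)).exists
    have hz₀G : z₀ ∈ Gs := ⟨hz₀U, hz₀a, hz₀g⟩
    have hinf : (h '' Gs).Infinite := by
      rcases hz₀a.eventually_constant_or_nhds_le_map_nhds with hcst | hmap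
      · exact absurd ⟨h z₀, mero_const_of_loc_const hmer hz₀U hcst⟩ hnc
      · have himg : h '' Gs ∈ 𝓝 (h z₀) := by
          apply hmap
          rw [Filter.mem_map]
          exact Filter.mem_of_superset (hGnhds z₀ hz₀G) (Set.subset_preimage_image h Gs)
        exact infinite_of_mem_nhds (h z₀) himg
    have heqS : ∀ w ∈ h '' Gs, moebC (ρ γ) w = moebC (ρ' γ) w := by
      rintro w ⟨z, ⟨hzU, hza, hzg⟩, rfl⟩
      have e1 := hequiv γ z hzU hza hzg
      have e2 := hequiv' γ z hzU hza hzg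
      rw [← e1, ← e2]
    exact moeb_proportional (hdet ρ γ) (hdet ρ' γ) hinf heqS
  choose f hf using main
  have hne : ∀ γ : Γ, ((ρ' γ : GL (Fin 2) ℂ) : Matrix (Fin 2) (Fin 2) ℂ) ≠ 0 := by
    intro γ h0
    apply hdet ρ' γ
    rw [h0]
    simp
  have huniq : ∀ (c c' : ℂˣ) (N : Matrix (Fin 2) (Fin 2) ℂ), N ≠ 0 →
      (c : ℂ) • N = (c' : ℂ) • N → c = c' := by
    intro c c' N hN hcc
    have h1 : ((c : ℂ) - (c' : ℂ)) • N = 0 := by rw [sub_smul, hcc, sub_self]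
    rcases smul_eq_zero.mp h1 with h2 | h2
    · exact Units.ext (sub_eq_zero.mp h2)
    · exact absurd h2 hN
  have hmulrule : ∀ γ δ : Γ, f (γ * δ) = f γ * f δ := by
    intro γ δ
    apply huniq _ _ _ (hne (γ * δ))
    rw [← hf (γ * δ)]
    have h1 : ((ρ (γ * δ) : GL (Fin 2) ℂ) : Matrix (Fin 2) (Fin 2) ℂ) =
        ((ρ γ : GL (Fin 2) ℂ) : Matrix (Fin 2) (Fin 2) ℂ) *
          ((ρ δ : GL (Fin 2) ℂ) : Matrix (Fin 2) (Fin 2) ℂ) := by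
      rw [_root_.map_mul, Units.val_mul]
    have h1' : ((ρ' (γ * δ) : GL (Fin 2) ℂ) : Matrix (Fin 2) (Fin 2) ℂ) =
        ((ρ' γ : GL (Fin 2) ℂ) : Matrix (Fin 2) (Fin 2) ℂ) *
          ((ρ' δ : GL (Fin 2) ℂ) : Matrix (Fin 2) (Fin 2) ℂ) := by
      rw [_root_.map_mul, Units.val_mul]
    rw [h1, hf γ, hf δ, h1', smul_mul_assoc, mul_smul_comm, smul_smul, Units.val_mul]
  exact ⟨MonoidHom.mk' f hmulrule, hf⟩
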